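/- Let s be the increasing enumeration of positive integers whose decimal representation contains no digit 9. Then the counting function S(n) = #{m ≤ n : m has no digit 9} satisfies S(n) ≤ 10·n^{log 9 / log 10} for all n ≥ 1. -/

import Mathlib

theorem kempner_counting_bound
    (S : ℕ → ℕ)
    (hS : ∀ n, S n = ((Finset.Icc 1 n).filter (fun m => 9 ∉ Nat.digits 10 m)).card) :
    ∀ n : ℕ, 1 ≤ n → (S n : ℝ) ≤ 10 * (n : ℝ) ^ (Real.log 9 / Real.log 10) := by
  intro n hn
  set d := (Nat.digits 10 n).length with hd
  have hd1 : 1 ≤ d := by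
    have : Nat.digits 10 n ≠ [] := Nat.digits_ne_nil_iff_ne_zero.mpr (by omega)
    have := List.length_pos_iff.mpr this
    omega
  -- digit facts for members of the filtered set
  have key : ∀ m, 1 ≤ m → 9 ∉ Nat.digits 10 m →
      (∀ x ∈ Nat.digits 10 m, x < 9) := by
    intro m hm h9 x hx
    have h1 : x < 10 := Nat.digits_lt_base (by norm_num) hx
    have h2 : x ≠ 9 := fun h => h9 (h ▸ hx)
    omega
  have hinv : ∀ m, 1 ≤ m → 9 ∉ Nat.digits 10 m →
      Nat.digits 9 (Nat.ofDigits 9 (Nat.digits 10 m)) = Nat.digits 10 m := by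
    intro m hm h9
    exact Nat.digits_ofDigits 9 (by norm_num) _ (key m hm h9)
      (fun h => Nat.getLast_digit_ne_zero 10 (by omega))
  -- cardinality bound: S n ≤ 9 ^ d
  have hcard : S n ≤ 9 ^ d := by
    rw [hS]
    have hsub : ((Finset.Icc 1 n).filter (fun m => 9 ∉ Nat.digits 10 m)).card
        ≤ (Finset.Ico 1 (9 ^ d)).card := by
      apply Finset.card_le_card_of_injOn (fun m => Nat.ofDigits 9 (Nat.digits 10 m))
      · intro m hm
        simp only [Finset.mem_coe, Finset.mem_filter, Finset.mem_Icc] at hm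
        obtain ⟨⟨hm1, hmn⟩, h9⟩ := hm
        simp only [Finset.mem_coe, Finset.mem_Ico]
        constructor
        · refine Nat.one_le_iff_ne_zero.mpr fun h0 => ?_
          have hne : Nat.digits 10 m ≠ [] := Nat.digits_ne_nil_iff_ne_zero.mpr (by omega)
          apply hne
          rw [← hinv m hm1 h9, h0]
          simp
        · have hlen : (Nat.digits 10 m).length ≤ d := Nat.le_digits_len_le 10 m n hmn
          calc Nat.ofDigits 9 (Nat.digits 10 m) < 9 ^ (Nat.digits 10 m).length :=
                Nat.ofDigits_lt_base_pow_length (by norm_num) (key m hm1 h9)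
            _ ≤ 9 ^ d := Nat.pow_le_pow_right (by norm_num) hlen
      · intro a ha b hb hab
        simp only [Finset.mem_coe, Finset.mem_filter, Finset.mem_Icc] at ha hb
        have h1 := hinv a ha.1.1 ha.2
        have h2 := hinv b hb.1.1 hb.2
        have : Nat.digits 10 a = Nat.digits 10 b := by
          rw [← h1, ← h2]; exact congrArg _ hab
        calc a = Nat.ofDigits 10 (Nat.digits 10 a) := (Nat.ofDigits_digits 10 a).symm
          _ = Nat.ofDigits 10 (Nat.digits 10 b) := by rw [this]
          _ = b := Nat.ofDigits_digits 10 b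
    rw [Nat.card_Ico] at hsub
    have : 1 ≤ 9 ^ d := Nat.one_le_pow _ _ (by norm_num)
    omega
  -- the lower bound 10^(d-1) ≤ n
  have hpow : (10 : ℕ) ^ (d - 1) ≤ n := by
    have h1 : (10 : ℕ) ^ d ≤ 10 * n :=
      Nat.base_pow_length_digits_le 10 n (by norm_num) (by omega)
    have h2 : (10 : ℕ) ^ d = 10 * 10 ^ (d - 1) := by
      rw [← pow_succ']
      congr 1
      omega
    omega
  -- real analysis part
  set α : ℝ := Real.log 9 / Real.log 10 with hα
  have hα0 : 0 ≤ α := by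
    apply div_nonneg <;> [exact Real.log_nonneg (by norm_num); exact Real.log_nonneg (by norm_num)]
  have h9eq : (9 : ℝ) = (10 : ℝ) ^ α := by
    rw [hα, Real.rpow_def_of_pos (by norm_num)]
    rw [mul_div_assoc', mul_comm, mul_div_assoc, div_self (by positivity : Real.log 10 ≠ 0)]
    · rw [mul_one, Real.exp_log (by norm_num)]
  have hstep : ((9 : ℝ)) ^ (d - 1) ≤ (n : ℝ) ^ α := by
    have : ((9 : ℝ)) ^ (d - 1) = ((10 : ℝ) ^ (d - 1 : ℕ)) ^ α := by
      rw [h9eq, ← Real.rpow_natCast ((10:ℝ) ^ α) (d-1), ← Real.rpow_mul (by norm_num),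
        mul_comm, Real.rpow_mul (by norm_num), Real.rpow_natCast]
    rw [this]
    apply Real.rpow_le_rpow (by positivity) _ hα0
    calc ((10:ℝ) ^ (d - 1 : ℕ)) = ((10 ^ (d-1) : ℕ) : ℝ) := by push_cast; ring
      _ ≤ (n : ℝ) := by exact_mod_cast hpow
  have hSn : (S n : ℝ) ≤ 9 ^ d := by exact_mod_cast hcard
  have h9d : (9 : ℝ) ^ d = 9 * 9 ^ (d - 1) := by
    rw [← pow_succ']
    congr 1
    omega
  calc (S n : ℝ) ≤ 9 ^ d := hSn
    _ = 9 * 9 ^ (d - 1) := h9d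
    _ ≤ 9 * (n : ℝ) ^ α := by linarith [hstep]
    _ ≤ 10 * (n : ℝ) ^ α := by
        have : (0:ℝ) ≤ (n:ℝ) ^ α := Real.rpow_nonneg (by positivity) α
        linarith
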